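/- Let σ = [p₀, …, p_j] be a nondegenerate j-simplex in ℝ^m with j ≥ 1 (its vertices are affinely independent), and let P be the m × j real matrix whose i-th column is p_i − p₀. Then the smallest singular value of P satisfies σ_j(P) ≥ √j · Υ(σ) · Δ(σ); equivalently, ‖Px‖ ≥ √j · Υ(σ) · Δ(σ) · ‖x‖ for all x ∈ ℝ^j. -/

import Mathlib

noncomputable section

/-- The smallest singular value of the matrix of edge vectors of a nondegenerate simplex
is at least `√j · Υ(σ) · Δ(σ)`. -/
theorem singular_value_lower_bound
    (m j : ℕ) (hj : 1 ≤ j)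
    (p : Fin (j + 1) → EuclideanSpace ℝ (Fin m))
    (hind : AffineIndependent ℝ p)
    (P : Matrix (Fin m) (Fin j) ℝ)
    (hP : ∀ (a : Fin m) (i : Fin j), P a i = (p i.succ - p 0) a)
    (Δ Υ : ℝ)
    -- `Δ(σ)`: the diameter (longest edge length)
    (hΔ : Δ = ⨆ i, ⨆ l, dist (p i) (p l))
    -- `Υ(σ)`: the thickness, `min_i D(p i, σ) / (j Δ(σ))` where `D` is the altitude
    (hΥ : Υ = (⨅ i, Metric.infDist (p i) (affineSpan ℝ (p '' {l | l ≠ i}))) / (j * Δ)) :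
    ∀ x : EuclideanSpace ℝ (Fin j),
      Real.sqrt j * Υ * Δ * ‖x‖ ≤ ‖Matrix.toEuclideanLin P x‖ := by
  intro x
  by_cases hx : x = 0
  · simp [hx]
  -- basic setup
  haveI : NeZero j := ⟨by omega⟩
  set v : Fin j → EuclideanSpace ℝ (Fin m) := fun i => p i.succ - p 0 with hv
  -- the image under the matrix is the linear combination of edge vectors
  have hPx : Matrix.toEuclideanLin P x = ∑ i, x i • v i := by
    apply PiLp.ext
    intro a
    have h1 : Matrix.toEuclideanLin P x a = ∑ i, P a i * x i := rfl
    rw [h1]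
    have h2 : (∑ i, x i • v i) a = ∑ i, x i * v i a := by
      rw [WithLp.ofLp_sum, Finset.sum_apply]
      rfl
    rw [h2]
    exact Finset.sum_congr rfl fun i _ => by rw [hP a i]; ring
  -- choose the index with the largest coordinate
  obtain ⟨k, hk⟩ := Finite.exists_max fun i : Fin j => |x i|
  have hxk : x k ≠ 0 := by
    intro h
    apply hx
    ext i
    have := hk i
    rw [h] at this
    simpa using this
  have hxkpos : (0:ℝ) < |x k| := abs_pos.mpr hxk
  -- ‖x‖ ≤ √j * |x k|
  have hnx : ‖x‖ ≤ Real.sqrt j * |x k| := by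
    rw [EuclideanSpace.norm_eq]
    have h1 : ∑ i, ‖x i‖ ^ 2 ≤ (j : ℝ) * |x k| ^ 2 := by
      calc ∑ i, ‖x i‖ ^ 2 ≤ ∑ _i : Fin j, |x k| ^ 2 :=
            Finset.sum_le_sum fun i _ => by
              have := hk i
              rw [Real.norm_eq_abs]
              exact pow_le_pow_left₀ (abs_nonneg _) this 2
        _ = (j : ℝ) * |x k| ^ 2 := by simp [mul_comm]
    calc Real.sqrt (∑ i, ‖x i‖ ^ 2) ≤ Real.sqrt ((j : ℝ) * |x k| ^ 2) :=
          Real.sqrt_le_sqrt h1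
      _ = Real.sqrt j * |x k| := by
          rw [Real.sqrt_mul (Nat.cast_nonneg j), Real.sqrt_sq (abs_nonneg _)]
  -- Δ is positive
  have hΔpos : (0:ℝ) < Δ := by
    have h01 : (0 : Fin (j+1)) ≠ 1 := by
      have : (1 : ℕ) < j + 1 := by omega
      simp [Fin.ext_iff, Fin.val_one, Nat.mod_eq_of_lt this]
    have hne : p 0 ≠ p 1 := fun h => h01 (hind.injective h)
    have hd : (0:ℝ) < dist (p 0) (p 1) := dist_pos.mpr hne
    have h1 : dist (p 0) (p 1) ≤ ⨆ l, dist (p 0) (p l) :=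
      le_ciSup (f := fun l => dist (p 0) (p l))
        (Set.Finite.bddAbove (Set.finite_range _)) 1
    have h2 : (⨆ l, dist (p 0) (p l)) ≤ ⨆ i, ⨆ l, dist (p i) (p l) :=
      le_ciSup (f := fun i => ⨆ l, dist (p i) (p l))
        (Set.Finite.bddAbove (Set.finite_range _)) 0
    rw [hΔ]
    exact lt_of_lt_of_le hd (h1.trans h2)
  -- notation for the infimum of altitudes
  set infD : ℝ := ⨅ i, Metric.infDist (p i) (affineSpan ℝ (p '' {l | l ≠ i})) with hinfD
  have hinfD_nonneg : 0 ≤ infD :=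
    Real.iInf_nonneg fun i => Metric.infDist_nonneg
  -- the affine span opposite vertex k.succ
  set A : AffineSubspace ℝ (EuclideanSpace ℝ (Fin m)) :=
    affineSpan ℝ (p '' {l | l ≠ k.succ}) with hA
  have hp0A : p 0 ∈ A := subset_affineSpan ℝ _ ⟨0, (Fin.succ_ne_zero k).symm, rfl⟩
  -- decompose Px
  set w : EuclideanSpace ℝ (Fin m) := ∑ i ∈ Finset.univ.erase k, x i • v i with hw
  have hsplit : Matrix.toEuclideanLin P x = x k • v k + w := by
    rw [hPx, hw]
    exact (Finset.add_sum_erase _ _ (Finset.mem_univ k)).symm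
  have hwdir : w ∈ A.direction := by
    apply Submodule.sum_mem
    intro i hi
    have hik : i ≠ k := Finset.ne_of_mem_erase hi
    apply Submodule.smul_mem
    have hpi : p i.succ ∈ A := by
      apply subset_affineSpan ℝ _
      exact ⟨i.succ, fun h => hik (Fin.succ_injective _ h), rfl⟩
    have := AffineSubspace.vsub_mem_direction hpi hp0A
    simpa [hv] using this
  -- the projected point q
  set q : EuclideanSpace ℝ (Fin m) := (-(x k)⁻¹) • w + p 0 with hq
  have hqA : q ∈ A := by
    have : ((-(x k)⁻¹) • w) +ᵥ p 0 ∈ A :=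
      AffineSubspace.vadd_mem_of_mem_direction (Submodule.smul_mem _ _ hwdir) hp0A
    simpa [hq] using this
  -- distance computation
  have hdist : dist (p k.succ) q = |x k|⁻¹ * ‖Matrix.toEuclideanLin P x‖ := by
    have h1 : p k.succ - q = (x k)⁻¹ • (Matrix.toEuclideanLin P x) := by
      rw [hsplit, hq, hv]
      rw [smul_add, smul_smul, inv_mul_cancel₀ hxk, one_smul]
      simp
      abel
    rw [dist_eq_norm, h1, norm_smul]
    simp [Real.norm_eq_abs, abs_inv]
  have hID : infD ≤ |x k|⁻¹ * ‖Matrix.toEuclideanLin P x‖ := by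
    have h1 : infD ≤ Metric.infDist (p k.succ) A := by
      rw [hinfD]
      exact ciInf_le ⟨0, Set.forall_mem_range.mpr fun i => Metric.infDist_nonneg⟩ k.succ
    have h2 : Metric.infDist (p k.succ) A ≤ dist (p k.succ) q :=
      Metric.infDist_le_dist_of_mem hqA
    rw [hdist] at h2
    exact h1.trans h2
  have hmain : infD * |x k| ≤ ‖Matrix.toEuclideanLin P x‖ := by
    have := mul_le_mul_of_nonneg_right hID (le_of_lt hxkpos)
    calc infD * |x k| ≤ |x k|⁻¹ * ‖Matrix.toEuclideanLin P x‖ * |x k| := this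
      _ = ‖Matrix.toEuclideanLin P x‖ := by
          field_simp
  -- final algebra
  have hsqrtpos : (0:ℝ) < Real.sqrt j := Real.sqrt_pos.mpr (by positivity)
  have hsq : Real.sqrt j * Real.sqrt j = (j : ℝ) := Real.mul_self_sqrt (Nat.cast_nonneg j)
  have hLHS : Real.sqrt j * Υ * Δ * ‖x‖ = infD * (‖x‖ / Real.sqrt j) := by
    rw [hΥ]
    field_simp
    linear_combination infD * hsq
  rw [hLHS]
  have hdiv : ‖x‖ / Real.sqrt j ≤ |x k| := by
    rw [div_le_iff₀ hsqrtpos]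
    linarith [hnx]
  calc infD * (‖x‖ / Real.sqrt j) ≤ infD * |x k| :=
        mul_le_mul_of_nonneg_left hdiv hinfD_nonneg
    _ ≤ ‖Matrix.toEuclideanLin P x‖ := hmain
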